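/- arXiv:2008.03491 — 2 statements merged into one kernel-verified Lean document; each statement's English description precedes it below -/
import Mathlib

section
/- Assume there exist x₊, x₋ ∈ H with [Vx₊,Vx₊]_E > 0 and [Vx₋,Vx₋]_E < 0, and that [Tx,Tx]_K ≥ 0 for every x ∈ H with [Vx,Vx]_E = 0. Define ρ₋ := −inf{ [Tx,Tx]_K / [Vx,Vx]_E : x ∈ H, [Vx,Vx]_E > 0 } and ρ₊ := −sup{ [Tx,Tx]_K / [Vx,Vx]_E : x ∈ H, [Vx,Vx]_E < 0 } (these infimum and supremum exist as real numbers under the hypotheses, and ρ₋ ≤ ρ₊). Then for any ρ ∈ ℝ with ρ ≠ 0 the following are equivalent: (1) T^#T + ρ·V^#V is positive semidefinite on H; (2) ρ₋ ≤ ρ ≤ ρ₊; (3) [Tx,Tx]_K + ρ·[Vx,Vx]_E ≥ 0 for every x ∈ H (i.e. the range of L is nonnegative for [·,·]_ρ). -/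
open scoped ComplexInnerProductSpace Pointwise

noncomputable section

variable {H K E : Type*}
  [NormedAddCommGroup H] [InnerProductSpace ℂ H] [CompleteSpace H]
  [NormedAddCommGroup K] [InnerProductSpace ℂ K] [CompleteSpace K]
  [NormedAddCommGroup E] [InnerProductSpace ℂ E] [CompleteSpace E]

/-- The operator `T^#T + ρ·V^#V = T*∘J_K∘T + ρ·V*∘J_E∘V` on `H`. -/
def smOp (JK : K →L[ℂ] K) (JE : E →L[ℂ] E) (T : H →L[ℂ] K) (V : H →L[ℂ] E) (ρ : ℝ) :
    H →L[ℂ] H :=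
  (ContinuousLinearMap.adjoint T) ∘L JK ∘L T +
    (ρ : ℂ) • ((ContinuousLinearMap.adjoint V) ∘L JE ∘L V)

/-- An operator on `H` is positive semidefinite if its quadratic form `⟨Ax,x⟩` is real
and nonnegative for every `x`. -/
def IsPosSemidef (A : H →L[ℂ] H) : Prop :=
  ∀ x : H, (⟪A x, x⟫).im = 0 ∧ 0 ≤ (⟪A x, x⟫).re

/-- `sm(ρ,z₀)`: the set of global minimizers of
`F_ρ(x) = [Tx,Tx]_K + ρ·[Vx−z₀,Vx−z₀]_E` over `H`. -/
def smSet (JK : K →L[ℂ] K) (JE : E →L[ℂ] E) (T : H →L[ℂ] K) (V : H →L[ℂ] E) (ρ : ℝ)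
    (z₀ : E) : Set H :=
  {xt : H | ∀ x : H,
    (⟪JK (T xt), T xt⟫).re + ρ * (⟪JE (V xt - z₀), V xt - z₀⟫).re ≤
      (⟪JK (T x), T x⟫).re + ρ * (⟪JE (V x - z₀), V x - z₀⟫).re}

/-- `sp(w₀)`: the set of minimizers of `x ↦ [Tx,Tx]_K` subject to `Vx = w₀`. -/
def spSet (JK : K →L[ℂ] K) (T : H →L[ℂ] K) (V : H →L[ℂ] E) (w₀ : E) : Set H :=
  {xt : H | V xt = w₀ ∧ ∀ x : H, V x = w₀ →
    (⟪JK (T xt), T xt⟫).re ≤ (⟪JK (T x), T x⟫).re}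

/-- `R(L)^[⊥]`: the `[·,·]_ρ`-orthogonal companion of the range of `L = (T,V)`. -/
def RLperp (JK : K →L[ℂ] K) (JE : E →L[ℂ] E) (T : H →L[ℂ] K) (V : H →L[ℂ] E) (ρ : ℝ) :
    Set (K × E) :=
  {p : K × E | ∀ x : H, ⟪JK (T x), p.1⟫ + (ρ : ℂ) * ⟪JE (V x), p.2⟫ = 0}

/-- `N₀ = ker V ∩ ((T^#T)(ker V))^⊥`. -/
def N0 (JK : K →L[ℂ] K) (T : H →L[ℂ] K) (V : H →L[ℂ] E) : Submodule ℂ H :=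
  LinearMap.ker (V : H →ₗ[ℂ] E) ⊓
    (Submodule.map (((ContinuousLinearMap.adjoint T) ∘L JK ∘L T : H →L[ℂ] H) : H →ₗ[ℂ] H)
      (LinearMap.ker (V : H →ₗ[ℂ] E)))ᗮ

/-- The set of ratios `[Tx,Tx]_K / [Vx,Vx]_E` over `x` with `[Vx,Vx]_E > 0`. -/
def posRatios (JK : K →L[ℂ] K) (JE : E →L[ℂ] E) (T : H →L[ℂ] K) (V : H →L[ℂ] E) : Set ℝ :=
  {t : ℝ | ∃ x : H, 0 < (⟪JE (V x), V x⟫).re ∧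
    t = (⟪JK (T x), T x⟫).re / (⟪JE (V x), V x⟫).re}

/-- The set of ratios `[Tx,Tx]_K / [Vx,Vx]_E` over `x` with `[Vx,Vx]_E < 0`. -/
def negRatios (JK : K →L[ℂ] K) (JE : E →L[ℂ] E) (T : H →L[ℂ] K) (V : H →L[ℂ] E) : Set ℝ :=
  {t : ℝ | ∃ x : H, (⟪JE (V x), V x⟫).re < 0 ∧
    t = (⟪JK (T x), T x⟫).re / (⟪JE (V x), V x⟫).re}

lemma sym_of_sa (J : K →L[ℂ] K) (hJ : IsSelfAdjoint J) (u v : K) :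
    ⟪J v, u⟫ = starRingEnd ℂ ⟪J u, v⟫ := by
  conv_lhs => rw [← hJ.adjoint_eq, ContinuousLinearMap.adjoint_inner_left, ← inner_conj_symm]

lemma im_zero (J : K →L[ℂ] K) (hJ : IsSelfAdjoint J) (u : K) : (⟪J u, u⟫).im = 0 := by
  exact Complex.conj_eq_iff_im.mp (sym_of_sa J hJ u u).symm

lemma quad (J : K →L[ℂ] K) (hJ : IsSelfAdjoint J) (u v : K) (l : ℂ) :
    (⟪J (u + l • v), u + l • v⟫).re =
      (⟪J u, u⟫).re + Complex.normSq l * (⟪J v, v⟫).re + 2 * (l * ⟪J u, v⟫).re := by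
  have h1 : (⟪v, J u⟫).re = (⟪J u, v⟫).re := by
    rw [← inner_conj_symm (J u) v]; exact (Complex.conj_re _)
  have h2 : (⟪v, J u⟫).im = -(⟪J u, v⟫).im := by
    have := Complex.conj_im (⟪v, J u⟫)
    rw [inner_conj_symm] at this
    linarith
  simp only [map_add, map_smul, inner_add_left, inner_add_right, inner_smul_left,
    inner_smul_right, sym_of_sa J hJ u v]
  simp [Complex.add_re, Complex.mul_re, Complex.normSq, h1, h2]
  ring

lemma key (JK : K →L[ℂ] K) (hJKsa : IsSelfAdjoint JK)
    (JE : E →L[ℂ] E) (hJEsa : IsSelfAdjoint JE)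
    (T : H →L[ℂ] K) (V : H →L[ℂ] E)
    (hcone : ∀ x : H, ⟪JE (V x), V x⟫ = 0 → 0 ≤ (⟪JK (T x), T x⟫).re)
    (x y : H) (ha : 0 < (⟪JE (V x), V x⟫).re) (hb : (⟪JE (V y), V y⟫).re < 0) :
    0 ≤ (-(⟪JE (V y), V y⟫).re) * (⟪JK (T x), T x⟫).re
      + (⟪JE (V x), V x⟫).re * (⟪JK (T y), T y⟫).re := by
  set a := (⟪JE (V x), V x⟫).re with ha'
  set b := (⟪JE (V y), V y⟫).re with hb'
  set c : ℂ := ⟪JE (V x), V y⟫ with hc'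
  have hbpos : 0 < -b := by linarith
  have hbne : b ≠ 0 := by linarith
  set s : ℝ := Real.sqrt (a / (-b)) with hs'
  have hs2 : s ^ 2 = a / (-b) := Real.sq_sqrt (by positivity)
  obtain ⟨l, hl1, hl2⟩ : ∃ l : ℂ, Complex.normSq l = a / (-b) ∧ (l * c).re = 0 := by
    by_cases hc : c = 0
    · refine ⟨(s : ℂ), ?_, by simp [hc]⟩
      rw [Complex.normSq_ofReal, ← sq, hs2]
    · have hd : ‖c‖ ≠ 0 := by simpa using hc
      refine ⟨((s / ‖c‖ : ℝ) : ℂ) * (Complex.I * starRingEnd ℂ c), ?_, ?_⟩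
      · rw [Complex.normSq_mul, Complex.normSq_mul, Complex.normSq_ofReal,
          Complex.normSq_I, Complex.normSq_conj]
        have hss : s * s = a / -b := by rw [← sq]; exact hs2
        rw [← Complex.sq_norm c]
        field_simp
        rw [hs2, div_neg, neg_mul, div_mul_cancel₀ a hbne]
      · have hcc : starRingEnd ℂ c * c = ((Complex.normSq c : ℝ) : ℂ) := by
          rw [mul_comm]; exact Complex.mul_conj c
        rw [mul_assoc, mul_assoc, hcc]
        simp [Complex.mul_re]
  have main : ∀ l' : ℂ, Complex.normSq l' = a / (-b) → (l' * c).re = 0 →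
      0 ≤ (⟪JK (T x), T x⟫).re + (a / (-b)) * (⟪JK (T y), T y⟫).re
          + 2 * (l' * ⟪JK (T x), T y⟫).re := by
    intro l' h1 h2
    have hv : V (x + l' • y) = V x + l' • V y := by simp
    have ht : T (x + l' • y) = T x + l' • T y := by simp
    have hVz : ⟪JE (V (x + l' • y)), V (x + l' • y)⟫ = 0 := by
      apply Complex.ext
      · rw [hv, quad JE hJEsa, h1, h2]
        have hab : a / (-b) * b = -a := by field_simp
        simp only [Complex.zero_re, ← ha', ← hb']
        linarith
      · rw [Complex.zero_im]; exact im_zero JE hJEsa _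
    have h0 := hcone _ hVz
    rw [ht, quad JK hJKsa, h1] at h0
    exact h0
  have e1 := main l hl1 hl2
  have e2 := main (-l) (by simpa using hl1) (by rw [neg_mul, Complex.neg_re, hl2, neg_zero])
  have e3 : 0 ≤ (⟪JK (T x), T x⟫).re + (a / (-b)) * (⟪JK (T y), T y⟫).re := by
    rw [neg_mul, Complex.neg_re] at e2
    linarith
  have e4 := mul_nonneg (le_of_lt hbpos) e3
  have e5 : -b * ((⟪JK (T x), T x⟫).re + a / (-b) * (⟪JK (T y), T y⟫).re)
      = -b * (⟪JK (T x), T x⟫).re + a * (⟪JK (T y), T y⟫).re := by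
    field_simp
    ring
  rw [e5] at e4
  linarith


lemma ratio_le (JK : K →L[ℂ] K) (hJKsa : IsSelfAdjoint JK)
    (JE : E →L[ℂ] E) (hJEsa : IsSelfAdjoint JE)
    (T : H →L[ℂ] K) (V : H →L[ℂ] E)
    (hcone : ∀ x : H, ⟪JE (V x), V x⟫ = 0 → 0 ≤ (⟪JK (T x), T x⟫).re)
    (x y : H) (hx : 0 < (⟪JE (V x), V x⟫).re) (hy : (⟪JE (V y), V y⟫).re < 0) :
    (⟪JK (T y), T y⟫).re / (⟪JE (V y), V y⟫).re ≤
      (⟪JK (T x), T x⟫).re / (⟪JE (V x), V x⟫).re := by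
  have hk := key JK hJKsa JE hJEsa T V hcone x y hx hy
  set A := (⟪JE (V x), V x⟫).re
  set B := (⟪JE (V y), V y⟫).re
  set F := (⟪JK (T x), T x⟫).re
  set G := (⟪JK (T y), T y⟫).re
  have hBpos : 0 < -B := by linarith
  have hBne : B ≠ 0 := by linarith
  have heq : F / A + G / (-B) = (-B * F + A * G) / (A * (-B)) := by
    field_simp
    ring
  have h2 : 0 ≤ (-B * F + A * G) / (A * (-B)) := div_nonneg hk (by positivity)
  have h3 : G / (-B) = -(G / B) := by rw [div_neg]
  rw [← heq, h3] at h2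
  linarith

theorem stmt1
    (JK : K →L[ℂ] K) (hJKsa : IsSelfAdjoint JK) (hJK2 : JK ∘L JK = 1)
    (JE : E →L[ℂ] E) (hJEsa : IsSelfAdjoint JE) (hJE2 : JE ∘L JE = 1)
    (T : H →L[ℂ] K) (V : H →L[ℂ] E)
    (hT : Function.Surjective T) (hV : Function.Surjective V)
    (hplus : ∃ xp : H, 0 < (⟪JE (V xp), V xp⟫).re)
    (hminus : ∃ xm : H, (⟪JE (V xm), V xm⟫).re < 0)
    (hcone : ∀ x : H, ⟪JE (V x), V x⟫ = 0 → 0 ≤ (⟪JK (T x), T x⟫).re)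
    (ρ : ℝ) (hρ : ρ ≠ 0) :
    ((posRatios JK JE T V).Nonempty ∧ BddBelow (posRatios JK JE T V) ∧
      (negRatios JK JE T V).Nonempty ∧ BddAbove (negRatios JK JE T V) ∧
      -sInf (posRatios JK JE T V) ≤ -sSup (negRatios JK JE T V)) ∧
    (IsPosSemidef (smOp JK JE T V ρ) ↔
      (-sInf (posRatios JK JE T V) ≤ ρ ∧ ρ ≤ -sSup (negRatios JK JE T V))) ∧
    ((-sInf (posRatios JK JE T V) ≤ ρ ∧ ρ ≤ -sSup (negRatios JK JE T V)) ↔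
      (∀ x : H, 0 ≤ (⟪JK (T x), T x⟫).re + ρ * (⟪JE (V x), V x⟫).re)) := by
  obtain ⟨xp, hxp⟩ := hplus
  obtain ⟨xm, hxm⟩ := hminus
  set P := posRatios JK JE T V with hP
  set N := negRatios JK JE T V with hN
  have hPne : P.Nonempty :=
    ⟨(⟪JK (T xp), T xp⟫).re / (⟪JE (V xp), V xp⟫).re, xp, hxp, rfl⟩
  have hNne : N.Nonempty :=
    ⟨(⟪JK (T xm), T xm⟫).re / (⟪JE (V xm), V xm⟫).re, xm, hxm, rfl⟩
  have hcomp : ∀ t1 ∈ N, ∀ t2 ∈ P, t1 ≤ t2 := by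
    rintro t1 ⟨y, hy, rfl⟩ t2 ⟨x, hx, rfl⟩
    exact ratio_le JK hJKsa JE hJEsa T V hcone x y hx hy
  have hbddP : BddBelow P :=
    ⟨(⟪JK (T xm), T xm⟫).re / (⟪JE (V xm), V xm⟫).re,
      fun t ht => hcomp _ ⟨xm, hxm, rfl⟩ _ ht⟩
  have hbddN : BddAbove N :=
    ⟨(⟪JK (T xp), T xp⟫).re / (⟪JE (V xp), V xp⟫).re,
      fun t ht => hcomp _ ht _ ⟨xp, hxp, rfl⟩⟩
  have hss : sSup N ≤ sInf P :=
    csSup_le hNne fun n hn => le_csInf hPne fun p hp => hcomp n hn p hp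
  have iff23 : (-sInf P ≤ ρ ∧ ρ ≤ -sSup N) ↔
      (∀ x : H, 0 ≤ (⟪JK (T x), T x⟫).re + ρ * (⟪JE (V x), V x⟫).re) := by
    constructor
    · rintro ⟨h1, h2⟩ x
      rcases lt_trichotomy ((⟪JE (V x), V x⟫).re) 0 with hgx | hgx | hgx
      · have hmem : (⟪JK (T x), T x⟫).re / (⟪JE (V x), V x⟫).re ∈ N := ⟨x, hgx, rfl⟩
        have h3 : (⟪JK (T x), T x⟫).re / (⟪JE (V x), V x⟫).re ≤ -ρ :=
          le_trans (le_csSup hbddN hmem) (by linarith)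
        rw [div_le_iff_of_neg hgx] at h3
        nlinarith
      · have h0 := hcone x (Complex.ext (by simpa using hgx) (im_zero JE hJEsa _))
        rw [hgx]
        simpa using h0
      · have hmem : (⟪JK (T x), T x⟫).re / (⟪JE (V x), V x⟫).re ∈ P := ⟨x, hgx, rfl⟩
        have h3 : -ρ ≤ (⟪JK (T x), T x⟫).re / (⟪JE (V x), V x⟫).re :=
          le_trans (by linarith) (csInf_le hbddP hmem)
        rw [le_div_iff₀ hgx] at h3
        nlinarith
    · intro h
      constructor
      · have h4 : -ρ ≤ sInf P := by
          apply le_csInf hPne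
          rintro t ⟨x, hgx, rfl⟩
          rw [le_div_iff₀ hgx]
          nlinarith [h x]
        linarith
      · have h4 : sSup N ≤ -ρ := by
          apply csSup_le hNne
          rintro t ⟨x, hgx, rfl⟩
          rw [div_le_iff_of_neg hgx]
          nlinarith [h x]
        linarith
  have hform : ∀ x : H, ⟪(smOp JK JE T V ρ) x, x⟫ =
      ⟪JK (T x), T x⟫ + (ρ : ℂ) * ⟪JE (V x), V x⟫ := by
    intro x
    rw [smOp, ContinuousLinearMap.add_apply, ContinuousLinearMap.smul_apply,
      inner_add_left, inner_smul_left, ContinuousLinearMap.comp_apply,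
      ContinuousLinearMap.comp_apply, ContinuousLinearMap.comp_apply,
      ContinuousLinearMap.comp_apply, ContinuousLinearMap.adjoint_inner_left,
      ContinuousLinearMap.adjoint_inner_left, Complex.conj_ofReal]
  have iff13 : IsPosSemidef (smOp JK JE T V ρ) ↔
      (∀ x : H, 0 ≤ (⟪JK (T x), T x⟫).re + ρ * (⟪JE (V x), V x⟫).re) := by
    constructor
    · intro hpsd x
      have h5 := (hpsd x).2
      rw [hform x] at h5
      simpa [Complex.add_re, Complex.mul_re] using h5
    · intro h x
      constructor
      · rw [hform x]
        simp [Complex.add_im, Complex.mul_im, im_zero JK hJKsa, im_zero JE hJEsa]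
      · rw [hform x]
        have := h x
        simp [Complex.add_re, Complex.mul_re]
        linarith
  exact ⟨⟨hPne, hbddP, hNne, hbddN, neg_le_neg hss⟩, iff13.trans iff23.symm, iff23⟩
end
end

section
/- Let ρ ∈ ℝ, ρ ≠ 0, and assume T^#T + ρ·V^#V is positive semidefinite on H. Then the following are equivalent: (1) for every z₀ ∈ E the function F_ρ(x) = [Tx,Tx]_K + ρ·[Vx−z₀,Vx−z₀]_E attains a global minimum on H; (2) R(L) + R(L)^[⊥] = K×E (i.e. R(L) is a regular subspace); (3) range(T^#T + ρ·V^#V) = (ker T)^⊥ + (ker V)^⊥, where ⊥ denotes the Hilbert orthogonal complement in H. Moreover, in this case, if x̃ is a global minimizer of F_ρ then the set of global minimizers of F_ρ equals x̃ + (ker T ∩ ker V). -/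
set_option maxHeartbeats 1000000


open scoped ComplexInnerProductSpace Pointwise

noncomputable section

variable {H K E : Type*}
  [NormedAddCommGroup H] [InnerProductSpace ℂ H] [CompleteSpace H]
  [NormedAddCommGroup K] [InnerProductSpace ℂ K] [CompleteSpace K]
  [NormedAddCommGroup E] [InnerProductSpace ℂ E] [CompleteSpace E]

lemma sa_inner {J : K →L[ℂ] K} (hJ : IsSelfAdjoint J) (a b : K) :
    (⟪J a, b⟫ : ℂ) = ⟪a, J b⟫ := by
  conv_lhs => rw [← ContinuousLinearMap.isSelfAdjoint_iff'.mp hJ]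
  exact ContinuousLinearMap.adjoint_inner_left J b a

lemma re_inner_comm {F : Type*} [NormedAddCommGroup F] [InnerProductSpace ℂ F] (a b : F) :
    (⟪a, b⟫ : ℂ).re = (⟪b, a⟫ : ℂ).re := by
  rw [← inner_conj_symm]
  exact Complex.conj_re _

lemma norm_sq_re_inner {F : Type*} [NormedAddCommGroup F] [InnerProductSpace ℂ F] (a : F) :
    (⟪a, a⟫ : ℂ).re = ‖a‖ ^ 2 := by
  have := @inner_self_eq_norm_sq ℂ _ _ _ _ a
  simpa using this

lemma range_adjoint_eq (T : H →L[ℂ] K) (hT : Function.Surjective T) :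
    LinearMap.range ((ContinuousLinearMap.adjoint T : K →L[ℂ] H) : K →ₗ[ℂ] H) = (LinearMap.ker (T : H →ₗ[ℂ] K))ᗮ := by
  obtain ⟨C, hC0, hC⟩ := T.exists_preimage_norm_le hT
  have hbound : ∀ y : K, ‖y‖ ≤ (⟨C, hC0.le⟩ : NNReal) * ‖ContinuousLinearMap.adjoint T y‖ := by
    intro y
    obtain ⟨x, hx, hxn⟩ := hC y
    have h1 : ‖y‖ ^ 2 = (⟪(ContinuousLinearMap.adjoint T) y, x⟫ : ℂ).re := by
      rw [ContinuousLinearMap.adjoint_inner_left, hx]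
      have := @inner_self_eq_norm_sq ℂ _ _ _ _ y
      simpa using this.symm
    have h2 : (⟪(ContinuousLinearMap.adjoint T) y, x⟫ : ℂ).re ≤
        ‖ContinuousLinearMap.adjoint T y‖ * ‖x‖ := by
      calc (⟪(ContinuousLinearMap.adjoint T) y, x⟫ : ℂ).re
          ≤ ‖(⟪(ContinuousLinearMap.adjoint T) y, x⟫ : ℂ)‖ := Complex.re_le_norm _
        _ ≤ _ := norm_inner_le_norm _ _
    by_cases hy : y = 0
    · simp [hy]
    · have hy0 : 0 < ‖y‖ := norm_pos_iff.mpr hy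
      have h3 : ‖y‖ * ‖y‖ ≤ (C * ‖ContinuousLinearMap.adjoint T y‖) * ‖y‖ := by
        nlinarith [norm_nonneg (ContinuousLinearMap.adjoint T y), h1, h2, hxn]
      have := le_of_mul_le_mul_right h3 hy0
      simpa using this
  have hanti := ContinuousLinearMap.antilipschitz_of_bound (ContinuousLinearMap.adjoint T) hbound
  have hclosed : IsClosed (Set.range (ContinuousLinearMap.adjoint T)) :=
    hanti.isClosed_range (ContinuousLinearMap.adjoint T).uniformContinuous
  have hcs : IsClosed ((LinearMap.range ((ContinuousLinearMap.adjoint T : K →L[ℂ] H) : K →ₗ[ℂ] H) :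
      Submodule ℂ H) : Set H) := by
    convert hclosed using 1
    exact Set.ext fun _ => LinearMap.mem_range
  haveI : CompleteSpace (LinearMap.range ((ContinuousLinearMap.adjoint T : K →L[ℂ] H) : K →ₗ[ℂ] H)) :=
    hcs.completeSpace_coe
  have horth : (LinearMap.range ((ContinuousLinearMap.adjoint T : K →L[ℂ] H) : K →ₗ[ℂ] H))ᗮ = LinearMap.ker (T : H →ₗ[ℂ] K) := by
    ext x
    simp only [Submodule.mem_orthogonal, LinearMap.mem_range, LinearMap.mem_ker,
      forall_exists_index]
    constructor
    · intro h
      have h2 : ∀ y : K, (⟪y, T x⟫ : ℂ) = 0 := fun y => by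
        rw [← ContinuousLinearMap.adjoint_inner_left]
        exact h _ y rfl
      have := h2 (T x)
      rwa [inner_self_eq_zero] at this
    · intro h u y hy
      subst hy
      rw [ContinuousLinearMap.coe_coe] at h
      rw [ContinuousLinearMap.coe_coe, ContinuousLinearMap.adjoint_inner_left, h, inner_zero_right]
  calc LinearMap.range ((ContinuousLinearMap.adjoint T : K →L[ℂ] H) : K →ₗ[ℂ] H)
      = (LinearMap.range ((ContinuousLinearMap.adjoint T : K →L[ℂ] H) : K →ₗ[ℂ] H))ᗮᗮ :=
        (Submodule.orthogonal_orthogonal _).symm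
    _ = (LinearMap.ker (T : H →ₗ[ℂ] K))ᗮ := by rw [horth]


theorem stmt8
    (JK : K →L[ℂ] K) (hJKsa : IsSelfAdjoint JK) (hJK2 : JK ∘L JK = 1)
    (JE : E →L[ℂ] E) (hJEsa : IsSelfAdjoint JE) (hJE2 : JE ∘L JE = 1)
    (T : H →L[ℂ] K) (V : H →L[ℂ] E)
    (hT : Function.Surjective T) (hV : Function.Surjective V)
    (ρ : ℝ) (hρ : ρ ≠ 0)
    (hpos : IsPosSemidef (smOp JK JE T V ρ)) :
    ((∀ z₀ : E, (smSet JK JE T V ρ z₀).Nonempty) ↔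
      (Set.range (fun x : H => (T x, V x)) + RLperp JK JE T V ρ = Set.univ)) ∧
    ((Set.range (fun x : H => (T x, V x)) + RLperp JK JE T V ρ = Set.univ) ↔
      (LinearMap.range (smOp JK JE T V ρ : H →ₗ[ℂ] H) =
        (LinearMap.ker (T : H →ₗ[ℂ] K))ᗮ ⊔ (LinearMap.ker (V : H →ₗ[ℂ] E))ᗮ)) ∧
    ((∀ z₀ : E, (smSet JK JE T V ρ z₀).Nonempty) →
      ∀ z₀ : E, ∀ xt ∈ smSet JK JE T V ρ z₀,
        smSet JK JE T V ρ z₀ =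
          (fun n => xt + n) '' ((LinearMap.ker (T : H →ₗ[ℂ] K) ⊓ LinearMap.ker (V : H →ₗ[ℂ] E) : Submodule ℂ H) : Set H)) := by
  classical
  set A := smOp JK JE T V ρ with hAdef
  set Tad := ContinuousLinearMap.adjoint T with hTad
  set Vad := ContinuousLinearMap.adjoint V with hVad
  have hρℂ : (ρ : ℂ) ≠ 0 := Complex.ofReal_ne_zero.mpr hρ
  have hJK2' : ∀ y : K, JK (JK y) = y := fun y => by
    have := congrArg (fun f : K →L[ℂ] K => f y) hJK2
    simpa using this
  have hJE2' : ∀ z : E, JE (JE z) = z := fun z => by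
    have := congrArg (fun f : E →L[ℂ] E => f z) hJE2
    simpa using this
  have hApp : ∀ x : H, A x = Tad (JK (T x)) + (ρ : ℂ) • Vad (JE (V x)) := by
    intro x; simp [hAdef, smOp, hTad, hVad]
  have hAinner : ∀ x y : H, (⟪A x, y⟫ : ℂ) = ⟪JK (T x), T y⟫ + (ρ : ℂ) * ⟪JE (V x), V y⟫ := by
    intro x y
    rw [hApp, inner_add_left, inner_smul_left, hTad, hVad,
      ContinuousLinearMap.adjoint_inner_left, ContinuousLinearMap.adjoint_inner_left,
      Complex.conj_ofReal]
  have hAinner' : ∀ x y : H, (⟪x, A y⟫ : ℂ) = ⟪JK (T x), T y⟫ + (ρ : ℂ) * ⟪JE (V x), V y⟫ := by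
    intro x y
    rw [hApp, inner_add_right, inner_smul_right, hTad, hVad,
      ContinuousLinearMap.adjoint_inner_right, ContinuousLinearMap.adjoint_inner_right,
      sa_inner hJKsa, sa_inner hJEsa]
  have hsym : ∀ x y : H, (⟪A x, y⟫ : ℂ) = ⟪x, A y⟫ := fun x y =>
    (hAinner x y).trans (hAinner' x y).symm
  set b : E → H := fun z₀ => (ρ : ℂ) • Vad (JE z₀) with hbdef
  have hbin : ∀ (z₀ : E) (x : H), (⟪x, b z₀⟫ : ℂ) = (ρ : ℂ) * ⟪JE (V x), z₀⟫ := by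
    intro z₀ x
    simp only [hbdef]
    rw [inner_smul_right, hVad, ContinuousLinearMap.adjoint_inner_right, ← sa_inner hJEsa]
  have hfexp : ∀ (z₀ : E) (x : H),
      (⟪JK (T x), T x⟫ : ℂ).re + ρ * (⟪JE (V x - z₀), V x - z₀⟫ : ℂ).re
        = ((⟪A x, x⟫ : ℂ).re - 2 * (⟪x, b z₀⟫ : ℂ).re) + ρ * (⟪JE z₀, z₀⟫ : ℂ).re := by
    intro z₀ x
    have hexp : (⟪JE (V x - z₀), V x - z₀⟫ : ℂ)
        = ⟪JE (V x), V x⟫ - ⟪JE (V x), z₀⟫ - ⟪JE z₀, V x⟫ + ⟪JE z₀, z₀⟫ := by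
      rw [map_sub, inner_sub_left, inner_sub_right, inner_sub_right]; ring
    have hconj : (⟪JE z₀, V x⟫ : ℂ).re = (⟪JE (V x), z₀⟫ : ℂ).re := by
      rw [sa_inner hJEsa]; exact re_inner_comm _ _
    rw [hexp, hAinner x x, hbin z₀ x]
    simp only [Complex.add_re, Complex.sub_re, Complex.mul_re, Complex.ofReal_re,
      Complex.ofReal_im]
    rw [hconj]
    ring
  have hkey : ∀ (z₀ : E) (x xt : H),
      ((⟪A x, x⟫ : ℂ).re - 2 * (⟪x, b z₀⟫ : ℂ).re)
          - ((⟪A xt, xt⟫ : ℂ).re - 2 * (⟪xt, b z₀⟫ : ℂ).re)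
        = (⟪A (x - xt), x - xt⟫ : ℂ).re + 2 * (⟪x - xt, A xt - b z₀⟫ : ℂ).re := by
    intro z₀ x xt
    have e1 : (⟪A (x - xt), x - xt⟫ : ℂ)
        = ⟪A x, x⟫ - ⟪A x, xt⟫ - ⟪A xt, x⟫ + ⟪A xt, xt⟫ := by
      rw [map_sub, inner_sub_left, inner_sub_right, inner_sub_right]; ring
    have e2 : (⟪x - xt, A xt - b z₀⟫ : ℂ)
        = ⟪x, A xt⟫ - ⟪x, b z₀⟫ - ⟪xt, A xt⟫ + ⟪xt, b z₀⟫ := by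
      rw [inner_sub_left, inner_sub_right, inner_sub_right]; ring
    have e3 : (⟪A x, xt⟫ : ℂ).re = (⟪x, A xt⟫ : ℂ).re := by rw [hsym]
    have e4 : (⟪A xt, x⟫ : ℂ).re = (⟪x, A xt⟫ : ℂ).re := re_inner_comm _ _
    have e5 : (⟪xt, A xt⟫ : ℂ).re = (⟪A xt, xt⟫ : ℂ).re := re_inner_comm _ _
    rw [e1, e2]
    simp only [Complex.add_re, Complex.sub_re]
    linarith [e3, e4, e5]
  have hposA : ∀ x : H, 0 ≤ (⟪A x, x⟫ : ℂ).re := fun x => (hpos x).2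
  have hmem : ∀ (z₀ : E) (xt : H), xt ∈ smSet JK JE T V ρ z₀ ↔ A xt = b z₀ := by
    intro z₀ xt
    simp only [smSet, Set.mem_setOf_eq]
    constructor
    · intro hxt
      set w := A xt - b z₀ with hw
      have hmin : ∀ x : H,
          0 ≤ (⟪A (x - xt), x - xt⟫ : ℂ).re + 2 * (⟪x - xt, w⟫ : ℂ).re := by
        intro x
        have h0 := hxt x
        have l1 := hfexp z₀ x
        have l2 := hfexp z₀ xt
        have l3 := hkey z₀ x xt
        rw [hw]
        linarith
      have hquad : ∀ t : ℝ,
          0 ≤ t ^ 2 * (⟪A w, w⟫ : ℂ).re + 2 * (t * (⟪w, w⟫ : ℂ).re) := by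
        intro t
        have h := hmin (xt + (t : ℂ) • w)
        have hsub : xt + (t : ℂ) • w - xt = (t : ℂ) • w := by abel
        rw [hsub, map_smul, inner_smul_left, inner_smul_right, inner_smul_left] at h
        simp only [Complex.conj_ofReal] at h
        have e : ∀ z : ℂ, ((t : ℂ) * z).re = t * z.re := fun z => by
          simp [Complex.mul_re]
        rw [e, e, e] at h
        nlinarith [h]
      set a := (⟪A w, w⟫ : ℂ).re with ha'
      set c := (⟪w, w⟫ : ℂ).re with hc'
      have ha : 0 ≤ a := hposA w
      have hcnn : 0 ≤ c := by rw [hc', norm_sq_re_inner]; positivity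
      have hc0 : c = 0 := by
        have h1 := hquad (-(c / (a + 1)))
        have ha1 : (0 : ℝ) < a + 1 := by linarith
        have hs : c = c / (a + 1) * (a + 1) := by field_simp
        have h2 : (c / (a + 1)) ^ 2 * (a + 2) ≤ 0 := by nlinarith [h1, hs]
        have h3 : (c / (a + 1)) ^ 2 ≤ 0 := by nlinarith
        have h4 : c / (a + 1) = 0 := by nlinarith [sq_nonneg (c / (a + 1))]
        rw [hs, h4, zero_mul]
      have hw0 : w = 0 := by
        have : ‖w‖ ^ 2 = 0 := by rw [← norm_sq_re_inner, ← hc', hc0]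
        have := pow_eq_zero_iff (n := 2) (by norm_num) |>.mp this
        exact norm_eq_zero.mp this
      have := sub_eq_zero.mp (hw ▸ hw0)
      exact this
    · intro hAxt x
      have l1 := hfexp z₀ x
      have l2 := hfexp z₀ xt
      have l3 := hkey z₀ x xt
      have l4 : (⟪x - xt, A xt - b z₀⟫ : ℂ) = 0 := by
        rw [hAxt, sub_self, inner_zero_right]
      have l4' : (⟪x - xt, A xt - b z₀⟫ : ℂ).re = 0 := by rw [l4]; rfl
      have l5 := hposA (x - xt)
      linarith
  have hrT : LinearMap.range (Tad : K →ₗ[ℂ] H) = (LinearMap.ker (T : H →ₗ[ℂ] K))ᗮ := by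
    rw [hTad]; exact range_adjoint_eq T hT
  have hrV : LinearMap.range (Vad : E →ₗ[ℂ] H) = (LinearMap.ker (V : H →ₗ[ℂ] E))ᗮ := by
    rw [hVad]; exact range_adjoint_eq V hV
  have hmemRL : ∀ p : K × E, p ∈ RLperp JK JE T V ρ ↔
      Tad (JK p.1) + (ρ : ℂ) • Vad (JE p.2) = 0 := by
    intro p
    have hterm : ∀ x : H, (⟪JK (T x), p.1⟫ : ℂ) + (ρ : ℂ) * ⟪JE (V x), p.2⟫
        = ⟪x, Tad (JK p.1) + (ρ : ℂ) • Vad (JE p.2)⟫ := by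
      intro x
      rw [inner_add_right, inner_smul_right, hTad, hVad,
        ContinuousLinearMap.adjoint_inner_right, ContinuousLinearMap.adjoint_inner_right,
        sa_inner hJKsa, sa_inner hJEsa]
    simp only [RLperp, Set.mem_setOf_eq]
    constructor
    · intro hp
      have h' : (⟪Tad (JK p.1) + (ρ : ℂ) • Vad (JE p.2),
          Tad (JK p.1) + (ρ : ℂ) • Vad (JE p.2)⟫ : ℂ) = 0 := by
        rw [← hterm _]; exact hp _
      rwa [inner_self_eq_zero] at h'
    · intro h x
      rw [hterm x, h, inner_zero_right]
  set q : K → E → H := fun y z => Tad (JK y) + (ρ : ℂ) • Vad (JE z) with hq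
  have h2iff : (Set.range (fun x : H => (T x, V x)) + RLperp JK JE T V ρ = Set.univ)
      ↔ ∀ (y : K) (z : E), ∃ x : H, A x = q y z := by
    constructor
    · intro h2 y z
      have hyz : (y, z) ∈ Set.range (fun x : H => (T x, V x)) + RLperp JK JE T V ρ := by
        rw [h2]; trivial
      rw [Set.mem_add] at hyz
      obtain ⟨u, hu, p, hp, hup⟩ := hyz
      obtain ⟨x, rfl⟩ := hu
      refine ⟨x, ?_⟩
      have hfst : T x + p.1 = y := by
        have := congrArg Prod.fst hup; simpa using this
      have hsnd : V x + p.2 = z := by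
        have := congrArg Prod.snd hup; simpa using this
      have hp1 : p.1 = y - T x := by rw [← hfst]; abel
      have hp2 : p.2 = z - V x := by rw [← hsnd]; abel
      have hpeq := (hmemRL p).1 hp
      rw [hp1, hp2, map_sub, map_sub, map_sub, map_sub, smul_sub] at hpeq
      have hz : (Tad (JK y) + (ρ : ℂ) • Vad (JE z))
          - (Tad (JK (T x)) + (ρ : ℂ) • Vad (JE (V x))) = 0 := by
        rw [← hpeq]; abel
      rw [hApp x]
      simp only [hq]
      exact (sub_eq_zero.mp hz).symm
    · intro h
      rw [Set.eq_univ_iff_forall]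
      rintro ⟨y, z⟩
      obtain ⟨x, hx⟩ := h y z
      rw [Set.mem_add]
      refine ⟨(T x, V x), ⟨x, rfl⟩, (y - T x, z - V x), ?_, ?_⟩
      · rw [hmemRL]
        have hx' : Tad (JK (T x)) + (ρ : ℂ) • Vad (JE (V x))
            = Tad (JK y) + (ρ : ℂ) • Vad (JE z) := by
          rw [← hApp x, hx]
        simp only [map_sub, smul_sub]
        rw [sub_add_sub_comm, ← hx', sub_self]
      · show (T x + (y - T x), V x + (z - V x)) = (y, z)
        simp
  have hrangele : LinearMap.range (A : H →ₗ[ℂ] H) ≤ (LinearMap.ker (T : H →ₗ[ℂ] K))ᗮ ⊔ (LinearMap.ker (V : H →ₗ[ℂ] E))ᗮ := by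
    rintro u ⟨x, rfl⟩
    rw [ContinuousLinearMap.coe_coe, hApp]
    refine Submodule.add_mem _ (Submodule.mem_sup_left ?_) (Submodule.mem_sup_right ?_)
    · rw [← hrT]; exact ⟨JK (T x), rfl⟩
    · rw [← hrV]; exact Submodule.smul_mem _ _ ⟨JE (V x), rfl⟩
  have h3iff : (LinearMap.range (A : H →ₗ[ℂ] H) = (LinearMap.ker (T : H →ₗ[ℂ] K))ᗮ ⊔ (LinearMap.ker (V : H →ₗ[ℂ] E))ᗮ)
      ↔ ∀ (y : K) (z : E), ∃ x : H, A x = q y z := by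
    constructor
    · intro h3 y z
      have hmemq : q y z ∈ (LinearMap.ker (T : H →ₗ[ℂ] K))ᗮ ⊔ (LinearMap.ker (V : H →ₗ[ℂ] E))ᗮ := by
        simp only [hq]
        refine Submodule.add_mem _ (Submodule.mem_sup_left ?_) (Submodule.mem_sup_right ?_)
        · rw [← hrT]; exact ⟨JK y, rfl⟩
        · rw [← hrV]; exact Submodule.smul_mem _ _ ⟨JE z, rfl⟩
      rw [← h3] at hmemq
      exact hmemq
    · intro h
      refine le_antisymm hrangele (sup_le ?_ ?_)
      · rw [← hrT]
        rintro u ⟨y, rfl⟩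
        obtain ⟨x, hx⟩ := h (JK y) 0
        refine ⟨x, ?_⟩
        rw [ContinuousLinearMap.coe_coe, hx]
        simp only [hq]
        simp [hJK2' y]
      · rw [← hrV]
        rintro u ⟨z, rfl⟩
        obtain ⟨x, hx⟩ := h 0 (JE ((ρ : ℂ)⁻¹ • z))
        refine ⟨x, ?_⟩
        rw [ContinuousLinearMap.coe_coe, hx]
        simp only [hq]
        rw [hJE2', map_smul, smul_smul, mul_inv_cancel₀ hρℂ, one_smul]
        simp
  have h1iff : (∀ z₀ : E, (smSet JK JE T V ρ z₀).Nonempty)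
      ↔ ∀ z₀ : E, ∃ x : H, A x = b z₀ := by
    constructor <;> intro h z₀ <;> obtain ⟨x, hx⟩ := h z₀
    · exact ⟨x, (hmem z₀ x).1 hx⟩
    · exact ⟨x, (hmem z₀ x).2 hx⟩
  have h12 : (∀ z₀ : E, ∃ x : H, A x = b z₀) ↔ ∀ (y : K) (z : E), ∃ x : H, A x = q y z := by
    constructor
    · intro h1 y z
      obtain ⟨x₁, hx₁⟩ := hT y
      obtain ⟨x₂, hx₂⟩ := h1 (V x₁)
      obtain ⟨x₃, hx₃⟩ := h1 z
      refine ⟨x₁ - x₂ + x₃, ?_⟩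
      rw [map_add, map_sub, hx₂, hx₃, hApp x₁, hx₁]
      simp only [hq, hbdef]
      abel
    · intro h z₀
      obtain ⟨x, hx⟩ := h 0 z₀
      refine ⟨x, ?_⟩
      rw [hx]
      simp only [hq, hbdef]
      simp
  refine ⟨?_, ?_, ?_⟩
  · rw [h1iff, h2iff]; exact h12
  · rw [h2iff, h3iff]
  · intro h1 z₀ xt hxt
    have hAxt : A xt = b z₀ := (hmem z₀ xt).1 hxt
    have h3 : LinearMap.range (A : H →ₗ[ℂ] H) = (LinearMap.ker (T : H →ₗ[ℂ] K))ᗮ ⊔ (LinearMap.ker (V : H →ₗ[ℂ] E))ᗮ :=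
      h3iff.2 (h12.1 (h1iff.1 h1))
    haveI : CompleteSpace (LinearMap.ker (T : H →ₗ[ℂ] K)) :=
      (ContinuousLinearMap.isClosed_ker T).completeSpace_coe
    haveI : CompleteSpace (LinearMap.ker (V : H →ₗ[ℂ] E)) :=
      (ContinuousLinearMap.isClosed_ker V).completeSpace_coe
    have hker : ∀ n : H, A n = 0 → n ∈ (LinearMap.ker (T : H →ₗ[ℂ] K) ⊓ LinearMap.ker (V : H →ₗ[ℂ] E) : Submodule ℂ H) := by
      intro n hn
      have hn' : n ∈ (LinearMap.range (A : H →ₗ[ℂ] H))ᗮ := by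
        rw [Submodule.mem_orthogonal]
        rintro u ⟨m, rfl⟩
        rw [ContinuousLinearMap.coe_coe, hsym, hn, inner_zero_right]
      rw [h3, ← Submodule.inf_orthogonal, Submodule.orthogonal_orthogonal,
        Submodule.orthogonal_orthogonal] at hn'
      exact hn'
    have hker' : ∀ n ∈ (LinearMap.ker (T : H →ₗ[ℂ] K) ⊓ LinearMap.ker (V : H →ₗ[ℂ] E) : Submodule ℂ H), A n = 0 := by
      intro n hn
      obtain ⟨hn1, hn2⟩ := Submodule.mem_inf.mp hn
      rw [LinearMap.mem_ker, ContinuousLinearMap.coe_coe] at hn1 hn2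
      rw [hApp]
      simp [hn1, hn2]
    ext x
    simp only [Set.mem_image, SetLike.mem_coe]
    constructor
    · intro hx
      have hAx : A x = b z₀ := (hmem z₀ x).1 hx
      refine ⟨x - xt, hker (x - xt) ?_, by abel⟩
      rw [map_sub, hAx, hAxt, sub_self]
    · rintro ⟨n, hn, rfl⟩
      apply (hmem z₀ (xt + n)).2
      rw [map_add, hAxt, hker' n hn, add_zero]
end
end
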